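/- Let A be a k-algebra and let s : H_q⊗A → A⊗H_q be a good left transposition of H_q on A. Then s(σ^{±1}⊗a) = a⊗σ^{±1} for all a ∈ A, and the bijective k-linear map α : A → A defined by s(D_1⊗a) = α(a)⊗D_1 is an algebra homomorphism (hence an algebra automorphism) of A. -/

import Mathlib

open TensorProduct

noncomputable section
namespace Paper

variable {k : Type*} [Field k]

section Combinators

variable {M N P Q M' N' P' M'' : Type*}
  [AddCommMonoid M] [AddCommMonoid N] [AddCommMonoid P] [AddCommMonoid Q]
  [AddCommMonoid M'] [AddCommMonoid N'] [AddCommMonoid P'] [AddCommMonoid M'']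
  [Module k M] [Module k N] [Module k P] [Module k Q]
  [Module k M'] [Module k N'] [Module k P'] [Module k M'']

/-- `(s ⊗ id) ∘ (id ⊗ s)` : braid a pair of factors past `P`. -/
def braidPast (f : N ⊗[k] P →ₗ[k] P ⊗[k] N') (g : M ⊗[k] P →ₗ[k] P ⊗[k] M') :
    (M ⊗[k] N) ⊗[k] P →ₗ[k] P ⊗[k] (M' ⊗[k] N') :=
  (TensorProduct.assoc k P M' N').toLinearMap
    ∘ₗ g.rTensor N'
    ∘ₗ (TensorProduct.assoc k M P N').symm.toLinearMap
    ∘ₗ f.lTensor M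
    ∘ₗ (TensorProduct.assoc k M N P).toLinearMap

def braidUnder (f : M ⊗[k] N →ₗ[k] N' ⊗[k] M') (g : M' ⊗[k] P →ₗ[k] P' ⊗[k] M'') :
    M ⊗[k] (N ⊗[k] P) →ₗ[k] (N' ⊗[k] P') ⊗[k] M'' :=
  (TensorProduct.assoc k N' P' M'').symm.toLinearMap
    ∘ₗ g.lTensor N'
    ∘ₗ (TensorProduct.assoc k N' M' P).toLinearMap
    ∘ₗ f.rTensor P
    ∘ₗ (TensorProduct.assoc k M N P).symm.toLinearMap

def midMap (f : N ⊗[k] P →ₗ[k] P' ⊗[k] N') :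
    (M ⊗[k] N) ⊗[k] (P ⊗[k] Q) →ₗ[k] (M ⊗[k] P') ⊗[k] (N' ⊗[k] Q) :=
  (TensorProduct.assoc k M P' (N' ⊗[k] Q)).symm.toLinearMap
    ∘ₗ ((TensorProduct.assoc k P' N' Q).toLinearMap.lTensor M)
    ∘ₗ ((f.rTensor Q).lTensor M)
    ∘ₗ ((TensorProduct.assoc k N P Q).symm.toLinearMap.lTensor M)
    ∘ₗ (TensorProduct.assoc k M N (P ⊗[k] Q)).toLinearMap

end Combinators

section Hq

variable (k)
variable (H : Type*) [Ring H]

/-- Axiomatisation of the Hopf algebra `H_q`. -/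
structure HqData [HopfAlgebra k H] (q : k) where
  D₁ : H
  D₂ : H
  σ : Hˣ
  D_comm : D₁ * D₂ = D₂ * D₁
  σD₁ : q • ((σ : H) * D₁) = D₁ * (σ : H)
  σD₂ : q • ((σ : H) * D₂) = D₂ * (σ : H)
  comul_D₁ : Coalgebra.comul (R := k) D₁ = D₁ ⊗ₜ[k] (σ : H) + 1 ⊗ₜ[k] D₁
  comul_D₂ : Coalgebra.comul (R := k) D₂ = D₂ ⊗ₜ[k] (1 : H) + (σ : H) ⊗ₜ[k] D₂
  comul_σ : Coalgebra.comul (R := k) ((σ : H)) = (σ : H) ⊗ₜ[k] (σ : H)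
  counit_D₁ : Coalgebra.counit (R := k) D₁ = 0
  counit_D₂ : Coalgebra.counit (R := k) D₂ = 0
  counit_σ : Coalgebra.counit (R := k) ((σ : H)) = 1
  basis_generic : (∀ l : ℕ, 2 ≤ l → ¬ IsPrimitiveRoot q l) →
      ∃ b : Module.Basis (ℤ × ℕ × ℕ) k H,
        ∀ i j m, b (i, j, m) = ((σ ^ i : Hˣ) : H) * D₁ ^ j * D₂ ^ m
  basis_root : ∀ l : ℕ, 2 ≤ l → IsPrimitiveRoot q l →
      D₁ ^ l = 0 ∧ D₂ ^ l = 0 ∧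
      ∃ b : Module.Basis (ℤ × Fin l × Fin l) k H,
        ∀ i j m, b (i, j, m) = ((σ ^ i : Hˣ) : H) * D₁ ^ (j : ℕ) * D₂ ^ (m : ℕ)

variable (A : Type*) [Ring A] [Algebra k A]

/-- A left transposition of a (standard, flip-braided) bialgebra `H` on an algebra `A`. -/
structure IsTransposition [HopfAlgebra k H] (s : H ⊗[k] A ≃ₗ[k] A ⊗[k] H) : Prop where
  unit_H : ∀ a : A, s ((1 : H) ⊗ₜ[k] a) = a ⊗ₜ[k] (1 : H)
  mul_H : s.toLinearMap ∘ₗ (LinearMap.mul' k H).rTensor A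
      = (LinearMap.mul' k H).lTensor A ∘ₗ braidPast s.toLinearMap s.toLinearMap
  counit_compat : (TensorProduct.rid k A).toLinearMap
        ∘ₗ (Coalgebra.counit (R := k) (A := H)).lTensor A ∘ₗ s.toLinearMap
      = (TensorProduct.lid k A).toLinearMap ∘ₗ (Coalgebra.counit (R := k) (A := H)).rTensor A
  comul_compat : (Coalgebra.comul (R := k) (A := H)).lTensor A ∘ₗ s.toLinearMap
      = braidPast s.toLinearMap s.toLinearMap ∘ₗ (Coalgebra.comul (R := k) (A := H)).rTensor A
  unit_A : ∀ h : H, s (h ⊗ₜ[k] (1 : A)) = (1 : A) ⊗ₜ[k] h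
  mul_A : s.toLinearMap ∘ₗ (LinearMap.mul' k A).lTensor H
      = (LinearMap.mul' k A).rTensor H ∘ₗ braidUnder s.toLinearMap s.toLinearMap
  braid_compat : braidPast s.toLinearMap s.toLinearMap
        ∘ₗ (TensorProduct.comm k H H).toLinearMap.rTensor A
      = (TensorProduct.comm k H H).toLinearMap.lTensor A
        ∘ₗ braidPast s.toLinearMap s.toLinearMap

/-- The action `H ⊗ A → A` attached to an algebra morphism `H →ₐ Module.End k A`. -/
def actMap [HopfAlgebra k H] (ρ : H →ₐ[k] Module.End k A) : H ⊗[k] A →ₗ[k] A :=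
  TensorProduct.lift ρ.toLinearMap

/-- `(A, s)` is a left `H`-braided module algebra via the action `ρ`
(braid of `H` = flip). -/
structure IsModuleAlgebra [HopfAlgebra k H] (s : H ⊗[k] A ≃ₗ[k] A ⊗[k] H)
    (ρ : H →ₐ[k] Module.End k A) : Prop where
  compat_s : s.toLinearMap ∘ₗ (actMap k H A ρ).lTensor H
        ∘ₗ (TensorProduct.assoc k H H A).toLinearMap
      = (actMap k H A ρ).rTensor H
        ∘ₗ (TensorProduct.assoc k H A H).symm.toLinearMap
        ∘ₗ s.toLinearMap.lTensor H
        ∘ₗ (TensorProduct.assoc k H H A).toLinearMap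
        ∘ₗ (TensorProduct.comm k H H).toLinearMap.rTensor A
  mul_act : ∀ (h : H) (a b : A), ρ h (a * b)
      = (LinearMap.mul' k A
          ∘ₗ TensorProduct.map (actMap k H A ρ) (actMap k H A ρ)
          ∘ₗ midMap s.toLinearMap)
        ((Coalgebra.comul (R := k) h) ⊗ₜ[k] (a ⊗ₜ[k] b))
  one_act : ∀ h : H, ρ h (1 : A) = Coalgebra.counit (R := k) h • (1 : A)

/-- `s` is a *good* transposition. -/
def GoodTransposition {q : k} [HopfAlgebra k H] (hq : HqData k H q)
    (s : H ⊗[k] A ≃ₗ[k] A ⊗[k] H) : Prop :=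
  ∀ a : A, braidPast s.toLinearMap s.toLinearMap ((hq.D₁ ⊗ₜ[k] hq.D₂) ⊗ₜ[k] a)
    = a ⊗ₜ[k] (hq.D₁ ⊗ₜ[k] hq.D₂)

end Hq


section Crossed

variable {G : Type*} [Group G] {V : Type*} [AddCommGroup V] [Module k V]

variable (G) in
/-- `f` is a normal 2-cocycle on `G` with values in `kˣ`. -/
structure IsCocycle (f : G → G → kˣ) : Prop where
  one_left : ∀ g, f 1 g = 1
  one_right : ∀ g, f g 1 = 1
  cocycle : ∀ g h l, f g h * f (g * h) l = f g (h * l) * f h l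

variable (A : Type*) [Ring A] [Algebra k A]

/-- Axiomatisation of the crossed product `S(V) #_f G`:  `A` is generated by a copy of `V`
(with commuting elements, generating a copy of the symmetric algebra) and elements `w g`,
and is free as a module over the symmetric part with basis `{w g}`. -/
structure CrossedProduct (ρV : Representation k G V) (f : G → G → kˣ) where
  ι : V →ₗ[k] A
  w : G → A
  w_one : w 1 = 1
  ι_comm : ∀ v v', ι v * ι v' = ι v' * ι v
  w_ι : ∀ g v, w g * ι v = ι (ρV g v) * w g
  w_mul : ∀ g h, w g * w h = (f g h : k) • w (g * h)
  isBasis : ∀ {n : ℕ} (bV : Module.Basis (Fin n) k V),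
      ∃ bA : Module.Basis ((Fin n → ℕ) × G) k A,
        ∀ d g, bA (d, g) = (List.ofFn fun i => ι (bV i) ^ d i).prod * w g

namespace CrossedProduct

variable {A} {ρV : Representation k G V} {f : G → G → kˣ}

/-- The product in `A` of the images of a list of elements of `V`. -/
def mon (cp : CrossedProduct A ρV f) (l : List V) : A := (l.map cp.ι).prod

/-- `v₁ ⋯ v_{j-1}` : the image of the prefix of a monomial. -/
def pre (cp : CrossedProduct A ρV f) {m : ℕ} (v : Fin m → V) (j : Fin m) : A :=
  cp.mon ((List.ofFn v).take j)

/-- `v_{j+1} ⋯ v_m` : the image of the suffix of a monomial. -/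
def suf (cp : CrossedProduct A ρV f) {m : ℕ} (v : Fin m → V) (j : Fin m) : A :=
  cp.mon ((List.ofFn v).drop (j + 1))

/-- The subalgebra `S(V)` of the crossed product. -/
def SV (cp : CrossedProduct A ρV f) : Subalgebra k A :=
  Algebra.adjoin k (Set.range cp.ι)

/-- The subalgebra `S(W)` of the crossed product, for a subspace `W ≤ V`. -/
def SW (cp : CrossedProduct A ρV f) (W : Submodule k V) : Subalgebra k A :=
  Algebra.adjoin k (cp.ι '' (W : Set V))

end CrossedProduct

/-- A linear endomorphism of `V` is `k[G]`-linear if it commutes with the `G`-action. -/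
def GLinear (ρV : Representation k G V) (φ : V →ₗ[k] V) : Prop :=
  ∀ g v, φ (ρV g v) = ρV g (φ v)

variable (G) in
/-- `χ : G → kˣ` is a group homomorphism. -/
def IsCharacter (χ : G → kˣ) : Prop := ∀ g h, χ (g * h) = χ g * χ h

section Defs

variable {H : Type*} [Ring H] [HopfAlgebra k H] {q : k}
variable {ρV : Representation k G V} {f : G → G → kˣ}

/-- `s` is the (good) transposition of `H_q` on `A` associated with the automorphism `α`. -/
def AssocTransposition (hq : HqData k H q)
    (s : H ⊗[k] A ≃ₗ[k] A ⊗[k] H) (α : A ≃ₐ[k] A) : Prop :=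
  IsTransposition k H A s ∧ GoodTransposition k H A hq s
    ∧ (∀ a : A, s (hq.D₁ ⊗ₜ[k] a) = α a ⊗ₜ[k] hq.D₁)
    ∧ (∀ a : A, s (hq.D₂ ⊗ₜ[k] a) = α.symm a ⊗ₜ[k] hq.D₂)

variable {A}

/-- `ς` is the endomorphism of `A` determined by `ς̂` and `χ_ς`. -/
def SigmaDef (cp : CrossedProduct A ρV f) (ςhat : V →ₗ[k] V) (χς : G → kˣ)
    (ς : Module.End k A) : Prop :=
  ∀ (m : ℕ) (v : Fin m → V) (g : G),
    ς (cp.mon (List.ofFn v) * cp.w g)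
      = (χς g : k) • (cp.mon (List.ofFn fun i => ςhat (v i)) * cp.w g)

/-- `δ₁` is determined by `δ̂₁`, `δ̄₁` via the `(α, ς)`-twisted Leibniz formula. -/
def Delta1Def (cp : CrossedProduct A ρV f) (α : A ≃ₐ[k] A) (ς : Module.End k A)
    (δhat : V →ₗ[k] A) (δbar : G → A) (δ : Module.End k A) : Prop :=
  ∀ (m : ℕ) (v : Fin m → V) (g : G),
    δ (cp.mon (List.ofFn v) * cp.w g)
      = (∑ j : Fin m, α (cp.pre v j) * δhat (v j) * ς (cp.suf v j * cp.w g))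
        + α (cp.mon (List.ofFn v)) * δbar g

/-- `δ₂` is determined by `δ̂₂`, `δ̄₂` via the `(ς ∘ α⁻¹, id)`-twisted Leibniz formula. -/
def Delta2Def (cp : CrossedProduct A ρV f) (α : A ≃ₐ[k] A) (ς : Module.End k A)
    (δhat : V →ₗ[k] A) (δbar : G → A) (δ : Module.End k A) : Prop :=
  ∀ (m : ℕ) (v : Fin m → V) (g : G),
    δ (cp.mon (List.ofFn v) * cp.w g)
      = (∑ j : Fin m, ς (α.symm (cp.pre v j)) * δhat (v j) * (cp.suf v j * cp.w g))
        + ς (α.symm (cp.mon (List.ofFn v))) * δbar g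

/-- There is an `H_q`-braided module algebra structure on `(A, s)` with the
prescribed values of the action on `V` and on the `w_g`. -/
def HasHqModuleStructure (hq : HqData k H q) (cp : CrossedProduct A ρV f)
    (s : H ⊗[k] A ≃ₗ[k] A ⊗[k] H) (ςhat : V →ₗ[k] V) (χς : G → kˣ)
    (δhat1 δhat2 : V →ₗ[k] A) (δbar1 δbar2 : G → A) : Prop :=
  ∃ ρ : H →ₐ[k] Module.End k A, IsModuleAlgebra k H A s ρ
    ∧ (∀ v : V, ρ (hq.σ : H) (cp.ι v) = cp.ι (ςhat v))
    ∧ (∀ g : G, ρ (hq.σ : H) (cp.w g) = (χς g : k) • cp.w g)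
    ∧ (∀ v : V, ρ hq.D₁ (cp.ι v) = δhat1 v)
    ∧ (∀ g : G, ρ hq.D₁ (cp.w g) = δbar1 g)
    ∧ (∀ v : V, ρ hq.D₂ (cp.ι v) = δhat2 v)
    ∧ (∀ g : G, ρ hq.D₂ (cp.w g) = δbar2 g)

end Defs

end Crossed

end Paper


namespace Paper
namespace Stmt3

variable {k : Type*} [Field k] {H : Type*} [AddCommGroup H] [Module k H] {ι : Type*}

/-- coordinate map on the right tensor factor w.r.t. a basis of `H` -/
def coordMap (b : Module.Basis ι k H) (M : Type*) [AddCommGroup M] [Module k M] (i : ι) :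
    M ⊗[k] H →ₗ[k] M :=
  (TensorProduct.rid k M).toLinearMap ∘ₗ (b.coord i).lTensor M

@[simp] lemma coordMap_tmul (b : Module.Basis ι k H) {M : Type*} [AddCommGroup M] [Module k M]
    (i : ι) (m : M) (h : H) :
    coordMap b M i (m ⊗ₜ[k] h) = b.repr h i • m := by
  simp [coordMap, Module.Basis.coord_apply]

lemma coordMap_ext (b : Module.Basis ι k H) {M : Type*} [AddCommGroup M] [Module k M]
    {x y : M ⊗[k] H} (h : ∀ i, coordMap b M i x = coordMap b M i y) : x = y := by
  classical
  let E : M ⊗[k] H ≃ₗ[k] (ι →₀ M) :=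
    (TensorProduct.congr (LinearEquiv.refl k M) b.repr) ≪≫ₗ
      TensorProduct.finsuppScalarRight k k M ι
  have key : ∀ (z : M ⊗[k] H) (i : ι), E z i = coordMap b M i z := by
    intro z i
    induction z using TensorProduct.induction_on with
    | zero => simp [E]
    | tmul m h' =>
        simp [E, TensorProduct.congr_tmul, finsuppScalarRight_apply_tmul_apply]
    | add u v hu hv => simp [map_add, Finsupp.add_apply, hu, hv]
  apply E.injective
  ext i
  rw [key, key]; exact h i

lemma coordMap_rTensor (b : Module.Basis ι k H) {M N : Type*} [AddCommGroup M] [Module k M]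
    [AddCommGroup N] [Module k N] (L : M →ₗ[k] N) (i : ι) (x : M ⊗[k] H) :
    coordMap b N i (L.rTensor H x) = L (coordMap b M i x) := by
  induction x using TensorProduct.induction_on with
  | zero => simp
  | tmul m h => simp
  | add u v hu hv => simp [map_add, hu, hv]

lemma tmul_right_inj (b : Module.Basis ι k H) {M : Type*} [AddCommGroup M] [Module k M]
    (i : ι) {D : H} (hbi : b i = D) {x y : M} (h : x ⊗ₜ[k] D = y ⊗ₜ[k] D) : x = y := by
  have := congrArg (coordMap b M i) h
  simpa [← hbi, Module.Basis.repr_self] using this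

lemma goodPair {A : Type*} [AddCommGroup A] [Module k A]
    (b : Module.Basis ι k H) (s : H ⊗[k] A ≃ₗ[k] A ⊗[k] H)
    (D D' : H) (i i' : ι) (hbi : b i = D) (hbi' : b i' = D')
    (hg : ∀ a : A, braidPast s.toLinearMap s.toLinearMap ((D ⊗ₜ[k] D') ⊗ₜ[k] a)
       = a ⊗ₜ[k] (D ⊗ₜ[k] D')) :
    ∃ c : A →ₗ[k] A, (∀ a, s.toLinearMap (D' ⊗ₜ[k] a) = c a ⊗ₜ[k] D')
      ∧ (∀ a, s.toLinearMap (D ⊗ₜ[k] (c a)) = a ⊗ₜ[k] D) := by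
  classical
  set sl := s.toLinearMap with hsl
  have hLinj : Function.Injective (sl ∘ₗ TensorProduct.mk k H A D) := by
    intro x y hxy
    have h1 : (TensorProduct.mk k H A D) x = (TensorProduct.mk k H A D) y :=
      s.injective hxy
    have := congrArg (fun z => (TensorProduct.lid k A) ((b.coord i).rTensor A z)) h1
    simpa [TensorProduct.mk_apply, Module.Basis.coord_apply, ← hbi, Module.Basis.repr_self] using this
  have hre : ∀ (x : H) (w : A ⊗[k] H),
      LinearMap.rTensor H sl ((TensorProduct.assoc k H A H).symm (x ⊗ₜ[k] w))
        = LinearMap.rTensor H (sl ∘ₗ TensorProduct.mk k H A x) w := by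
    intro x w
    induction w using TensorProduct.induction_on with
    | zero => simp
    | tmul p q => simp [TensorProduct.assoc_symm_tmul]
    | add u v hu hv => simp [tmul_add, map_add, hu, hv]
  have key : ∀ a : A, (sl ∘ₗ TensorProduct.mk k H A D).rTensor H (sl (D' ⊗ₜ[k] a))
      = (a ⊗ₜ[k] D) ⊗ₜ[k] D' := by
    intro a
    have hb2 := hg a
    simp only [braidPast, LinearMap.coe_comp, Function.comp_apply, LinearEquiv.coe_coe,
      TensorProduct.assoc_tmul, LinearMap.lTensor_tmul, hre] at hb2
    have h3 := congrArg (TensorProduct.assoc k A H H).symm hb2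
    simpa [TensorProduct.assoc_symm_tmul] using h3
  have keyc : ∀ (a : A) (j : ι),
      (sl ∘ₗ TensorProduct.mk k H A D) (coordMap b A j (sl (D' ⊗ₜ[k] a)))
        = b.repr D' j • (a ⊗ₜ[k] D) := by
    intro a j
    have h4 := congrArg (coordMap b (A ⊗[k] H) j) (key a)
    rw [coordMap_rTensor] at h4
    simpa using h4
  have hD'self : b.repr D' i' = 1 := by
    rw [← hbi', Module.Basis.repr_self, Finsupp.single_eq_same]
  have hD'ne : ∀ j, j ≠ i' → b.repr D' j = 0 := by
    intro j hj
    rw [← hbi', Module.Basis.repr_self, Finsupp.single_eq_of_ne' fun hh => hj hh.symm]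
  refine ⟨(coordMap b A i') ∘ₗ sl ∘ₗ (TensorProduct.mk k H A D'), ?_, ?_⟩
  · intro a
    apply coordMap_ext b
    intro j
    by_cases hj : j = i'
    · subst hj
      rw [coordMap_tmul, hD'self, one_smul]
      rfl
    · rw [coordMap_tmul, hD'ne j hj, zero_smul]
      apply hLinj
      rw [keyc a j, hD'ne j hj, zero_smul, map_zero]
  · intro a
    have h5 := keyc a i'
    rw [hD'self, one_smul] at h5
    simpa [TensorProduct.mk_apply] using h5

set_option synthInstance.maxHeartbeats 1000000 in
set_option maxHeartbeats 2000000 in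
lemma mainAux {H : Type*} [Ring H] [HopfAlgebra k H] {q : k} (hq : HqData k H q)
    {A : Type*} [Ring A] [Algebra k A]
    (s : H ⊗[k] A ≃ₗ[k] A ⊗[k] H) (hs : IsTransposition k H A s)
    (hgood : GoodTransposition k H A hq s)
    {ι : Type*} (b : Module.Basis ι k H) (i₁ i₂ : ι) (hb₁ : b i₁ = hq.D₁) (hb₂ : b i₂ = hq.D₂) :
    (∀ a : A, s ((hq.σ : H) ⊗ₜ[k] a) = a ⊗ₜ[k] (hq.σ : H))
    ∧ (∀ a : A, s (((hq.σ⁻¹ : Hˣ) : H) ⊗ₜ[k] a) = a ⊗ₜ[k] ((hq.σ⁻¹ : Hˣ) : H))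
    ∧ ∃ α : A ≃ₗ[k] A, (∀ a : A, s (hq.D₁ ⊗ₜ[k] a) = α a ⊗ₜ[k] hq.D₁)
        ∧ α 1 = 1 ∧ ∀ a b : A, α (a * b) = α a * α b := by
  classical
  -- flipped goodness
  have hccId : (TensorProduct.comm k H H).toLinearMap ∘ₗ (TensorProduct.comm k H H).toLinearMap
      = LinearMap.id := by
    apply TensorProduct.ext'; intro x y; simp
  have hcomminj : Function.Injective ((TensorProduct.comm k H H).toLinearMap.lTensor A) := by
    intro x y hxy
    have h2 := congrArg ((TensorProduct.comm k H H).toLinearMap.lTensor A) hxy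
    rwa [← LinearMap.comp_apply, ← LinearMap.comp_apply, ← LinearMap.lTensor_comp, hccId,
      LinearMap.lTensor_id, LinearMap.id_apply, LinearMap.id_apply] at h2
  have hgood' : ∀ a : A, braidPast s.toLinearMap s.toLinearMap
      ((hq.D₂ ⊗ₜ[k] hq.D₁) ⊗ₜ[k] a) = a ⊗ₜ[k] (hq.D₂ ⊗ₜ[k] hq.D₁) := by
    intro a
    apply hcomminj
    have hbc := LinearMap.congr_fun hs.braid_compat ((hq.D₂ ⊗ₜ[k] hq.D₁) ⊗ₜ[k] a)
    simp only [LinearMap.coe_comp, Function.comp_apply, LinearMap.rTensor_tmul,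
      LinearEquiv.coe_coe, TensorProduct.comm_tmul] at hbc
    rw [← hbc, hgood a]
    simp [LinearMap.lTensor_tmul, TensorProduct.comm_tmul]
  obtain ⟨c, hc1, hc2⟩ := goodPair b s hq.D₁ hq.D₂ i₁ i₂ hb₁ hb₂ hgood
  obtain ⟨d, hd1, hd2⟩ := goodPair b s hq.D₂ hq.D₁ i₂ i₁ hb₂ hb₁ hgood'
  have hd1' : ∀ x : A, s (hq.D₁ ⊗ₜ[k] x) = d x ⊗ₜ[k] hq.D₁ := hd1
  have hc1' : ∀ x : A, s (hq.D₂ ⊗ₜ[k] x) = c x ⊗ₜ[k] hq.D₂ := hc1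
  have hc2' : ∀ x : A, s (hq.D₁ ⊗ₜ[k] c x) = x ⊗ₜ[k] hq.D₁ := hc2
  have hd2' : ∀ x : A, s (hq.D₂ ⊗ₜ[k] d x) = x ⊗ₜ[k] hq.D₂ := hd2
  have hdc : ∀ a : A, d (c a) = a := by
    intro a
    apply tmul_right_inj b i₁ hb₁ (x := d (c a)) (y := a)
    rw [← hd1' (c a), hc2' a]
  have hcd : ∀ a : A, c (d a) = a := by
    intro a
    apply tmul_right_inj b i₂ hb₂ (x := c (d a)) (y := a)
    rw [← hc1' (d a), hd2' a]
  -- the generic braiding computation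
  have hPhi : ∀ (x : H) (e : A →ₗ[k] A), (∀ z : A, s (x ⊗ₜ[k] z) = e z ⊗ₜ[k] x) →
      ∀ w : A ⊗[k] H,
      (TensorProduct.assoc k A H H) (LinearMap.rTensor H s.toLinearMap
        ((TensorProduct.assoc k H A H).symm (x ⊗ₜ[k] w)))
        = TensorProduct.map e (TensorProduct.mk k H H x) w := by
    intro x e he w
    induction w using TensorProduct.induction_on with
    | zero => simp only [TensorProduct.tmul_zero, map_zero]
    | tmul p q =>
        simp only [TensorProduct.assoc_symm_tmul, LinearMap.rTensor_tmul,
          LinearEquiv.coe_coe, TensorProduct.map_tmul, TensorProduct.mk_apply]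
        rw [he p]
        simp
    | add u v hu hv => simp only [TensorProduct.tmul_add, map_add, hu, hv]
  -- sigma
  have hσ : ∀ a : A, s ((hq.σ : H) ⊗ₜ[k] a) = a ⊗ₜ[k] (hq.σ : H) := by
    intro a
    have hPinv : (((TensorProduct.lid k H).toLinearMap ∘ₗ (b.coord i₁).rTensor H)
        ∘ₗ TensorProduct.mk k H H hq.D₁) = LinearMap.id := by
      ext h
      simp [Module.Basis.coord_apply, ← hb₁, Module.Basis.repr_self]
    have hcdId : c ∘ₗ d = LinearMap.id := by ext z; simp [hcd]
    have hmapinj : Function.Injective (TensorProduct.map d (TensorProduct.mk k H H hq.D₁)) := by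
      intro x y hxy
      have h6 := congrArg (TensorProduct.map c
        ((TensorProduct.lid k H).toLinearMap ∘ₗ (b.coord i₁).rTensor H)) hxy
      rwa [← LinearMap.comp_apply, ← LinearMap.comp_apply, ← TensorProduct.map_comp, hcdId,
        hPinv, TensorProduct.map_id, LinearMap.id_apply, LinearMap.id_apply] at h6
    have hterm1 : braidPast s.toLinearMap s.toLinearMap
        ((hq.D₁ ⊗ₜ[k] (hq.σ : H)) ⊗ₜ[k] a)
        = TensorProduct.map d (TensorProduct.mk k H H hq.D₁) (s ((hq.σ : H) ⊗ₜ[k] a)) := by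
      simp only [braidPast, LinearMap.coe_comp, Function.comp_apply, LinearEquiv.coe_coe,
        TensorProduct.assoc_tmul, LinearMap.lTensor_tmul]
      exact hPhi hq.D₁ d hd1' _
    have hterm2 : braidPast s.toLinearMap s.toLinearMap
        (((1 : H) ⊗ₜ[k] hq.D₁) ⊗ₜ[k] a) = d a ⊗ₜ[k] ((1 : H) ⊗ₜ[k] hq.D₁) := by
      simp only [braidPast, LinearMap.coe_comp, Function.comp_apply, LinearEquiv.coe_coe,
        TensorProduct.assoc_tmul, LinearMap.lTensor_tmul]
      rw [hd1' a]
      simp only [TensorProduct.assoc_symm_tmul, LinearMap.rTensor_tmul, LinearEquiv.coe_coe]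
      rw [hs.unit_H (d a)]
      simp [TensorProduct.assoc_tmul]
    have hcm := LinearMap.congr_fun hs.comul_compat (hq.D₁ ⊗ₜ[k] a)
    simp only [LinearMap.coe_comp, Function.comp_apply, LinearMap.rTensor_tmul,
      LinearEquiv.coe_coe] at hcm
    rw [hd1' a] at hcm
    simp only [LinearMap.lTensor_tmul] at hcm
    rw [hq.comul_D₁] at hcm
    simp only [TensorProduct.tmul_add, TensorProduct.add_tmul, map_add] at hcm
    rw [hterm1, hterm2] at hcm
    apply hmapinj
    have h8 : TensorProduct.map d (TensorProduct.mk k H H hq.D₁) (a ⊗ₜ[k] (hq.σ : H))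
        = d a ⊗ₜ[k] (hq.D₁ ⊗ₜ[k] (hq.σ : H)) := by
      simp only [TensorProduct.map_tmul, TensorProduct.mk_apply]
    rw [h8]
    exact (add_right_cancel hcm).symm
  -- sigma inverse
  have hσinv : ∀ a : A, s (((hq.σ⁻¹ : Hˣ) : H) ⊗ₜ[k] a)
      = a ⊗ₜ[k] ((hq.σ⁻¹ : Hˣ) : H) := by
    intro a
    have h9 : (LinearMap.mulLeft k (((hq.σ⁻¹ : Hˣ)) : H))
        ∘ₗ (LinearMap.mulLeft k ((hq.σ : H))) = LinearMap.id := by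
      ext h; simp
    have hmlinj : Function.Injective ((LinearMap.mulLeft k ((hq.σ : H))).lTensor A) := by
      intro x y hxy
      have h10 := congrArg ((LinearMap.mulLeft k (((hq.σ⁻¹ : Hˣ)) : H)).lTensor A) hxy
      rwa [← LinearMap.comp_apply, ← LinearMap.comp_apply, ← LinearMap.lTensor_comp, h9,
        LinearMap.lTensor_id, LinearMap.id_apply, LinearMap.id_apply] at h10
    have hml : ∀ w : A ⊗[k] H, (LinearMap.mul' k H).lTensor A
        (TensorProduct.map LinearMap.id (TensorProduct.mk k H H (hq.σ : H)) w)
        = (LinearMap.mulLeft k ((hq.σ : H))).lTensor A w := by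
      intro w
      induction w using TensorProduct.induction_on with
      | zero => simp
      | tmul p q => simp [LinearMap.mul'_apply]
      | add u v hu hv => simp [map_add, hu, hv]
    have hmH := LinearMap.congr_fun hs.mul_H
      (((hq.σ : H) ⊗ₜ[k] ((hq.σ⁻¹ : Hˣ) : H)) ⊗ₜ[k] a)
    simp only [LinearMap.coe_comp, Function.comp_apply, LinearMap.rTensor_tmul,
      LinearEquiv.coe_coe, LinearMap.mul'_apply, Units.mul_inv] at hmH
    rw [hs.unit_H a] at hmH
    have hterm : braidPast s.toLinearMap s.toLinearMap
        (((hq.σ : H) ⊗ₜ[k] ((hq.σ⁻¹ : Hˣ) : H)) ⊗ₜ[k] a)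
        = TensorProduct.map LinearMap.id (TensorProduct.mk k H H (hq.σ : H))
            (s (((hq.σ⁻¹ : Hˣ) : H) ⊗ₜ[k] a)) := by
      simp only [braidPast, LinearMap.coe_comp, Function.comp_apply, LinearEquiv.coe_coe,
        TensorProduct.assoc_tmul, LinearMap.lTensor_tmul]
      exact hPhi (hq.σ : H) LinearMap.id (fun z => hσ z) _
    rw [hterm, hml] at hmH
    apply hmlinj
    rw [← hmH]
    simp [Units.mul_inv]
  refine ⟨hσ, hσinv, LinearEquiv.ofLinear d c (by ext z; simp [hdc]) (by ext z; simp [hcd]),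
    ?_, ?_, ?_⟩
  · intro a
    simpa [LinearEquiv.ofLinear_apply] using hd1' a
  · rw [LinearEquiv.ofLinear_apply]
    apply tmul_right_inj b i₁ hb₁ (x := d 1) (y := (1 : A))
    rw [← hd1' 1, hs.unit_A hq.D₁]
  · intro x y
    simp only [LinearEquiv.ofLinear_apply]
    have hmulA := LinearMap.congr_fun hs.mul_A (hq.D₁ ⊗ₜ[k] (x ⊗ₜ[k] y))
    simp only [braidUnder, LinearMap.coe_comp, Function.comp_apply, LinearEquiv.coe_coe,
      LinearMap.lTensor_tmul, LinearMap.rTensor_tmul, LinearMap.mul'_apply,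
      TensorProduct.assoc_symm_tmul, TensorProduct.assoc_tmul, hd1'] at hmulA
    exact tmul_right_inj b i₁ hb₁ hmulA

end Stmt3
end Paper

open Paper in
/-- A good transposition of `H_q` fixes `σ^{±1}` and its associated
map `α` is an algebra automorphism. -/
theorem statement_3 {k : Type*} [Field k] {q : k} (hq0 : q ≠ 0)
    {H : Type*} [Ring H] [HopfAlgebra k H] (hq : HqData k H q)
    {A : Type*} [Ring A] [Algebra k A]
    (s : H ⊗[k] A ≃ₗ[k] A ⊗[k] H) (hs : IsTransposition k H A s)
    (hgood : GoodTransposition k H A hq s) :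
    (∀ a : A, s ((hq.σ : H) ⊗ₜ[k] a) = a ⊗ₜ[k] (hq.σ : H))
    ∧ (∀ a : A, s (((hq.σ⁻¹ : Hˣ) : H) ⊗ₜ[k] a) = a ⊗ₜ[k] ((hq.σ⁻¹ : Hˣ) : H))
    ∧ ∃ α : A ≃ₗ[k] A, (∀ a : A, s (hq.D₁ ⊗ₜ[k] a) = α a ⊗ₜ[k] hq.D₁)
        ∧ α 1 = 1 ∧ ∀ a b : A, α (a * b) = α a * α b := by
  by_cases hgen : ∀ l : ℕ, 2 ≤ l → ¬ IsPrimitiveRoot q l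
  · obtain ⟨b, hb⟩ := hq.basis_generic hgen
    refine Paper.Stmt3.mainAux hq s hs hgood b ((0 : ℤ), 1, 0) ((0 : ℤ), 0, 1) ?_ ?_
    · rw [hb]; simp
    · rw [hb]; simp
  · push_neg at hgen
    obtain ⟨l, hl2, hprim⟩ := hgen
    obtain ⟨-, -, b, hb⟩ := hq.basis_root l hl2 hprim
    refine Paper.Stmt3.mainAux hq s hs hgood b
      ((0 : ℤ), (⟨1, by omega⟩ : Fin l), (⟨0, by omega⟩ : Fin l))
      ((0 : ℤ), (⟨0, by omega⟩ : Fin l), (⟨1, by omega⟩ : Fin l)) ?_ ?_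
    · rw [hb]; simp
    · rw [hb]; simp
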